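/- Let I be the ideal generated by all square-free monomials of degree d in k[x_1,...,x_n]. Then for every k ≥ 1, I^k is generated by exactly those monomials x_1^{a_1}···x_n^{a_n} of degree dk satisfying a_i ≤ k for all i. -/

import Mathlib

open MvPolynomial

section Aux

variable {K : Type*} [Field K] {n : ℕ}

private lemma ind_apply (s : Finset (Fin n)) (j : Fin n) :
    (∑ i ∈ s, Finsupp.single i 1) j = if j ∈ s then 1 else 0 := by
  classical
  rw [Finset.sum_apply']
  simp [Finsupp.single_apply]

private lemma ind_sum (s : Finset (Fin n)) :
    ∑ j, (∑ i ∈ s, Finsupp.single i 1 : Fin n →₀ ℕ) j = s.card := by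
  classical
  simp [ind_apply]

private lemma mon_prod (s : Finset (Fin n)) :
    (monomial (∑ i ∈ s, Finsupp.single i 1) (1 : K)) = ∏ i ∈ s, X i := by
  classical
  induction s using Finset.induction with
  | empty => simp
  | insert _ _ h ih =>
    rw [Finset.sum_insert h, Finset.prod_insert h, monomial_single_add, pow_one, ih]

private lemma sum_univ_eq_sum_support (a : Fin n →₀ ℕ) :
    ∑ i, a i = ∑ i ∈ a.support, a i := by
  classical
  exact (Finset.sum_subset (Finset.subset_univ _)
    (fun x _ hx => Finsupp.notMem_support_iff.mp hx)).symm

end Aux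

/-- If I is the ideal generated by all square-free monomials of degree d in n variables,
then I^k is generated by exactly the monomials of degree d*k with all exponents ≤ k. -/
theorem stmt_12 (K : Type*) [Field K] (n d k : ℕ) (hd : 1 ≤ d) (hdn : d ≤ n) (hk : 1 ≤ k) :
    (Ideal.span {f : MvPolynomial (Fin n) K |
        ∃ s : Finset (Fin n), s.card = d ∧ f = ∏ i ∈ s, X i}) ^ k =
      Ideal.span {f : MvPolynomial (Fin n) K |
        ∃ a : Fin n →₀ ℕ, (∑ i, a i = d * k) ∧ (∀ i, a i ≤ k) ∧ f = monomial a 1} := by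
  classical
  induction k, hk using Nat.le_induction with
  | base =>
    rw [pow_one]
    apply le_antisymm <;> rw [Ideal.span_le] <;> rintro f hf
    · obtain ⟨s, hs, rfl⟩ := hf
      apply Ideal.subset_span
      refine ⟨∑ i ∈ s, Finsupp.single i 1, ?_, ?_, (mon_prod s).symm⟩
      · rw [ind_sum, hs, mul_one]
      · intro i; rw [ind_apply]; split <;> omega
    · obtain ⟨a, hsum, hle, rfl⟩ := hf
      apply Ideal.subset_span
      refine ⟨a.support, ?_, ?_⟩
      · have h1 : ∀ i ∈ a.support, a i = 1 := by
          intro i hi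
          have := Finsupp.mem_support_iff.mp hi
          have := hle i; omega
        have : ∑ i, a i = a.support.card := by
          rw [sum_univ_eq_sum_support, Finset.sum_congr rfl h1]; simp
        omega
      · have : a = ∑ i ∈ a.support, Finsupp.single i 1 := by
          ext j
          rw [ind_apply]
          split
          · next h => have := Finsupp.mem_support_iff.mp h; have := hle j; omega
          · next h => exact Finsupp.notMem_support_iff.mp h
        rw [← mon_prod]
        exact congrArg (fun b => monomial b (1 : K)) this
  | succ k hk ih =>
    rw [pow_succ, ih, Ideal.span_mul_span']
    apply le_antisymm <;> rw [Ideal.span_le] <;> rintro f hf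
    · obtain ⟨x, hx, y, hy, rfl⟩ := Set.mem_mul.mp hf
      obtain ⟨a, hsum, hle, rfl⟩ := hx
      obtain ⟨s, hs, rfl⟩ := hy
      apply Ideal.subset_span
      refine ⟨a + ∑ i ∈ s, Finsupp.single i 1, ?_, ?_, ?_⟩
      · simp only [Finsupp.add_apply, Finset.sum_add_distrib, hsum, ind_sum, hs]
        ring
      · intro i
        have := hle i
        have : (∑ i ∈ s, Finsupp.single i 1 : Fin n →₀ ℕ) i ≤ 1 := by
          rw [ind_apply]; split <;> omega
        simp only [Finsupp.add_apply]; omega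
      · rw [← mon_prod (K := K) s, monomial_mul, mul_one]
    · obtain ⟨a, hsum, hle, rfl⟩ := hf
      -- choose a set s of d indices, containing all i with a i = k + 1,
      -- inside the support of a
      set E : Finset (Fin n) := a.support.filter (fun i => a i = k + 1) with hE
      have hEsupp : E ⊆ a.support := Finset.filter_subset _ _
      have hEcard : E.card ≤ d := by
        have h1 : E.card * (k + 1) = ∑ i ∈ E, a i := by
          rw [Finset.sum_congr rfl (fun i hi => (Finset.mem_filter.mp hi).2)]
          simp [mul_comm]; rfl
        have h2 : ∑ i ∈ E, a i ≤ ∑ i ∈ a.support, a i :=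
          Finset.sum_le_sum_of_subset hEsupp
        rw [← sum_univ_eq_sum_support, hsum] at h2
        nlinarith
      have hsuppcard : d ≤ a.support.card := by
        have h1 : ∑ i ∈ a.support, a i ≤ a.support.card * (k + 1) := by
          apply Finset.sum_le_card_nsmul
          intro i _; exact hle i
        rw [← sum_univ_eq_sum_support, hsum] at h1
        nlinarith
      obtain ⟨s, hEs, hssupp, hscard⟩ :=
        Finset.exists_subsuperset_card_eq hEsupp hEcard hsuppcard
      set b : Fin n →₀ ℕ := ∑ i ∈ s, Finsupp.single i 1 with hb
      have hba : ∀ j, b j ≤ a j := by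
        intro j
        rw [hb, ind_apply]
        split
        · next h =>
          have := Finsupp.mem_support_iff.mp (hssupp h); omega
        · omega
      have hdecomp : a = (a - b) + b := by
        ext j
        simp only [Finsupp.add_apply, Finsupp.tsub_apply]
        have := hba j; omega
      have hsub_le : ∀ j, (a - b) j ≤ k := by
        intro j
        rw [Finsupp.tsub_apply, hb, ind_apply]
        split
        · have := hle j; omega
        · next h =>
          have hne : a j ≠ k + 1 := by
            intro hc
            exact h (hEs (Finset.mem_filter.mpr
              ⟨Finsupp.mem_support_iff.mpr (by omega), hc⟩))
          have := hle j; omega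
      have hsub_sum : ∑ i, (a - b) i = d * k := by
        have h1 : ∑ i, a i = ∑ i, (a - b) i + ∑ i, b i := by
          conv_lhs => rw [hdecomp]
          simp [Finsupp.add_apply, Finset.sum_add_distrib]
        rw [hb, ind_sum, hscard] at h1
        rw [hsum, ← hb] at h1; nlinarith
      have heq : monomial a (1 : K) = monomial (a - b) 1 * monomial b 1 := by
        rw [monomial_mul, mul_one, ← hdecomp]
      have h1 : monomial (a - b) (1 : K) ∈ {f : MvPolynomial (Fin n) K |
          ∃ a : Fin n →₀ ℕ, (∑ i, a i = d * k) ∧ (∀ i, a i ≤ k) ∧ f = monomial a 1} :=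
        ⟨a - b, hsub_sum, hsub_le, rfl⟩
      have h2 : monomial b (1 : K) ∈ {f : MvPolynomial (Fin n) K |
          ∃ s : Finset (Fin n), s.card = d ∧ f = ∏ i ∈ s, X i} :=
        ⟨s, hscard, by rw [hb, mon_prod]⟩
      rw [heq]
      exact Ideal.subset_span (Set.mul_mem_mul h1 h2)
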